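/- (Necessary condition for Lasso density evolution convergence.) Let the prior be π(s) = (k/n)·δ_{c₀}(s) + (1 − k/n)·δ_0(s) with c₀ > 0 and 0 < k < n, and let β = (n-independent) constant calibrated as β ≍ log(n/k). Define a₁ = Σ_{i,j} ρ_i λ_j √(i/j) and a₂ = Σ_{i,j} ρ_i λ_j (i/j) for probability vectors (ρ_i), (λ_j). If the density evolution recursion E^{(t+1)} = E_{π,z}[(prox(s + a₁z√{E^{(t)}}; βa₂V^{(t)}) − s)²], V^{(t+1)} = E_{π,z}[βa₂V^{(t)}·prox'(s + a₁z√{E^{(t)}}; βa₂V^{(t)})] converges to (0,0) from generic small initial conditions, then a₁² ≤ n/k and β a₂ ≤ n/k. -/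

import Mathlib

open Filter MeasureTheory ProbabilityTheory

/-- The soft-thresholding operator. -/
noncomputable def prox (x b : ℝ) : ℝ := Real.sign x * max (|x| - b) 0

/-- The (a.e.) derivative of soft thresholding in its first argument. -/
noncomputable def proxD (x b : ℝ) : ℝ := if b < |x| then 1 else 0

section LassoAux

open Real Set
open scoped ENNReal NNReal

/-! ### Gaussian facts -/

noncomputable def lassoGpdf (x : ℝ) : ℝ := gaussianPDFReal 0 1 x

lemma lassoGpdf_eq (x : ℝ) : lassoGpdf x = (Real.sqrt (2*π))⁻¹ * Real.exp (-(1/2) * x^2) := by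
  unfold lassoGpdf gaussianPDFReal
  push_cast
  rw [mul_one, sub_zero]
  congr 1
  ring

lemma lassoGpdf_pos (x : ℝ) : 0 < lassoGpdf x := gaussianPDFReal_pos 0 1 x one_ne_zero

lemma lassoGpdf_even (x : ℝ) : lassoGpdf (-x) = lassoGpdf x := by
  rw [lassoGpdf_eq, lassoGpdf_eq, neg_sq]

lemma lasso_gauss_eq :
    gaussianReal 0 1 = MeasureTheory.volume.withDensity (fun x => ENNReal.ofReal (lassoGpdf x)) := by
  rw [gaussianReal_of_var_ne_zero 0 one_ne_zero]
  rfl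

lemma lasso_gauss_integral (g : ℝ → ℝ) :
    ∫ z, g z ∂(gaussianReal 0 1) = ∫ x, lassoGpdf x * g x := by
  rw [lasso_gauss_eq]
  have h : (fun x => ENNReal.ofReal (lassoGpdf x)) = (fun x => ((lassoGpdf x).toNNReal : ℝ≥0∞)) := rfl
  rw [h, integral_withDensity_eq_integral_smul
    (by exact (measurable_gaussianPDFReal 0 1).real_toNNReal) g]
  congr 1
  funext x
  rw [NNReal.smul_def, Real.coe_toNNReal _ (lassoGpdf_pos x).le, smul_eq_mul]

lemma lasso_integrable_sq_exp : Integrable (fun x : ℝ => x^2 * Real.exp (-(1/2) * x^2)) := by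
  have h := integrable_rpow_mul_exp_neg_mul_sq (b := 1/2) (by norm_num) (s := 2) (by norm_num)
  refine h.congr ?_
  filter_upwards with x
  rw [show ((2:ℝ) = ((2:ℕ):ℝ)) by norm_num, Real.rpow_natCast]

lemma lasso_integrable_exp' : Integrable (fun x : ℝ => Real.exp (-(1/2) * x^2)) :=
  integrable_exp_neg_mul_sq (by norm_num)

lemma lasso_integrable_mul_exp' : Integrable (fun x : ℝ => x * Real.exp (-(1/2) * x^2)) :=
  integrable_mul_exp_neg_mul_sq (by norm_num)

lemma lasso_ibp_sq_exp : ∫ x : ℝ, x^2 * Real.exp (-(1/2) * x^2) = Real.sqrt (2*π) := by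
  have hu : ∀ x : ℝ, HasDerivAt (fun y : ℝ => y) (1 : ℝ) x := fun x => hasDerivAt_id x
  have hv : ∀ x : ℝ, HasDerivAt (fun y : ℝ => -Real.exp (-(1/2) * y^2))
      (x * Real.exp (-(1/2) * x^2)) x := by
    intro x
    have h1 : HasDerivAt (fun y : ℝ => -(1/2) * y^2) (-(1/2) * (2*x)) x := by
      simpa using ((hasDerivAt_pow 2 x).const_mul (-(1/2:ℝ)))
    have h2 : HasDerivAt (fun y : ℝ => -Real.exp (-(1/2) * y^2))
        (-(Real.exp (-(1/2) * x^2) * (-(1/2) * (2*x)))) x := (h1.exp).neg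
    convert h2 using 1
    ring
  have huv' : Integrable (fun x : ℝ => x * (x * Real.exp (-(1/2) * x^2))) := by
    refine lasso_integrable_sq_exp.congr ?_
    filter_upwards with x
    ring
  have hu'v : Integrable (fun x : ℝ => (1:ℝ) * (-Real.exp (-(1/2) * x^2))) := by
    refine lasso_integrable_exp'.neg.congr ?_
    filter_upwards with x
    simp
  have huv : Integrable (fun x : ℝ => x * (-Real.exp (-(1/2) * x^2))) := by
    refine lasso_integrable_mul_exp'.neg.congr ?_
    filter_upwards with x
    simp
  have key := integral_mul_deriv_eq_deriv_mul_of_integrable (fun x _ => hu x) (fun x _ => hv x) huv' hu'v huv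
  have h2 : ∫ x : ℝ, x^2 * Real.exp (-(1/2) * x^2)
      = ∫ x : ℝ, x * (x * Real.exp (-(1/2) * x^2)) := by
    congr 1; funext x; ring
  have h3 : ∫ x : ℝ, (1:ℝ) * (-Real.exp (-(1/2) * x^2)) = -∫ x : ℝ, Real.exp (-(1/2) * x^2) := by
    rw [← integral_neg]
    congr 1; funext x; ring
  have h4 : ∫ x : ℝ, Real.exp (-(1/2) * x^2) = Real.sqrt (2*π) := by
    have h := integral_gaussian (1/2)
    rw [h]
    congr 1
    ring
  rw [h2, key, h3, neg_neg, h4]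

lemma lasso_gauss_integrable_sq : Integrable (fun x : ℝ => x^2) (gaussianReal 0 1) := by
  have h : Integrable (fun x : ℝ => lassoGpdf x * x^2) := by
    refine (lasso_integrable_sq_exp.const_mul ((Real.sqrt (2*π))⁻¹)).congr ?_
    filter_upwards with x
    rw [lassoGpdf_eq]
    ring
  rw [gaussianReal_of_var_ne_zero 0 one_ne_zero]
  have hd : (gaussianPDF 0 1) = (fun x => ((lassoGpdf x).toNNReal : ℝ≥0∞)) := rfl
  rw [hd, integrable_withDensity_iff_integrable_smul
    (by exact (measurable_gaussianPDFReal 0 1).real_toNNReal)]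
  refine h.congr ?_
  filter_upwards with x
  rw [NNReal.smul_def, Real.coe_toNNReal _ (lassoGpdf_pos x).le, smul_eq_mul]

lemma lasso_gauss_integrable_id : Integrable (fun x : ℝ => x) (gaussianReal 0 1) := by
  refine Integrable.mono' ((integrable_const (1:ℝ)).add lasso_gauss_integrable_sq)
    measurable_id.aestronglyMeasurable ?_
  filter_upwards with x
  simp only [norm_eq_abs, Pi.add_apply]
  nlinarith [abs_nonneg x, sq_abs x, sq_nonneg (|x| - 1)]

lemma lasso_gauss_integral_sq : ∫ x, x^2 ∂(gaussianReal 0 1) = 1 := by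
  rw [lasso_gauss_integral]
  have h : ∀ x : ℝ, lassoGpdf x * x^2 = (Real.sqrt (2*π))⁻¹ * (x^2 * Real.exp (-(1/2) * x^2)) := by
    intro x; rw [lassoGpdf_eq]; ring
  simp only [h]
  rw [integral_const_mul, lasso_ibp_sq_exp, inv_mul_cancel₀]
  positivity

lemma lasso_setIntegral_id (M : ℝ) : ∫ z in {z : ℝ | |z| ≤ M}, z ∂(gaussianReal 0 1) = 0 := by
  set S := {z : ℝ | |z| ≤ M} with hS
  have hSm : MeasurableSet S := measurableSet_le (measurable_abs) measurable_const
  rw [← integral_indicator hSm, lasso_gauss_integral]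
  set h : ℝ → ℝ := fun x => lassoGpdf x * S.indicator (fun z => z) x with hh
  have hodd : ∀ x, h (-x) = - h x := by
    intro x
    simp only [hh, lassoGpdf_even]
    rcases le_or_gt (|x|) M with hx | hx
    · rw [indicator_of_mem (by simpa [hS, abs_neg] using hx),
        indicator_of_mem (by simpa [hS] using hx)]
      ring
    · rw [indicator_of_notMem (by simp [hS, abs_neg]; exact hx),
        indicator_of_notMem (by simp [hS]; exact hx)]
      ring
  have hcomp : ∫ x, h (-x) = ∫ x, h x :=
    (Measure.measurePreserving_neg _).integral_comp
      (Homeomorph.neg ℝ).measurableEmbedding h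
  have hzero : ∫ x, h x = - ∫ x, h x := by
    conv_lhs => rw [← hcomp]
    rw [show (fun x => h (-x)) = fun x => -h x from funext hodd]
    exact integral_neg h
  linarith

lemma lasso_ball_union : (⋃ m : ℕ, {z : ℝ | |z| ≤ (m:ℝ)}) = univ := by
  ext x
  simp only [mem_iUnion, mem_setOf_eq, mem_univ, iff_true]
  exact exists_nat_ge |x|

lemma lasso_ball_meas (M : ℝ) : MeasurableSet {z : ℝ | |z| ≤ M} :=
  measurableSet_le measurable_abs measurable_const

lemma lasso_ball_mono : Monotone (fun m : ℕ => {z : ℝ | |z| ≤ (m:ℝ)}) := by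
  intro a b hab z hz
  simp only [mem_setOf_eq] at *
  exact hz.trans (by exact_mod_cast hab)

lemma lasso_tendsto_sq :
    Tendsto (fun m : ℕ => ∫ z in {z : ℝ | |z| ≤ (m:ℝ)}, z^2 ∂(gaussianReal 0 1))
      atTop (nhds 1) := by
  have h := tendsto_setIntegral_of_monotone (μ := gaussianReal 0 1)
    (f := fun z : ℝ => z^2) (fun m : ℕ => lasso_ball_meas (m:ℝ)) lasso_ball_mono
    (by rw [lasso_ball_union]; exact (integrableOn_univ).mpr lasso_gauss_integrable_sq)
  rwa [lasso_ball_union, setIntegral_univ, lasso_gauss_integral_sq] at h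

lemma lasso_tendsto_one :
    Tendsto (fun m : ℕ => ∫ z in {z : ℝ | |z| ≤ (m:ℝ)}, (1:ℝ) ∂(gaussianReal 0 1))
      atTop (nhds 1) := by
  have h := tendsto_setIntegral_of_monotone (μ := gaussianReal 0 1)
    (f := fun _ : ℝ => (1:ℝ)) (fun m : ℕ => lasso_ball_meas (m:ℝ)) lasso_ball_mono
    (by rw [lasso_ball_union]; exact (integrableOn_univ).mpr (integrable_const 1))
  rwa [lasso_ball_union, setIntegral_univ, integral_const, probReal_univ,
    one_smul] at h

lemma lasso_Ioi_pos (a : ℝ) : 0 < ∫ z in Ioi a, (1:ℝ) ∂(gaussianReal 0 1) := by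
  rw [setIntegral_const, smul_eq_mul, mul_one]
  refine ENNReal.toReal_pos ?_ (measure_ne_top _ _)
  rw [gaussianReal_apply_eq_integral 0 one_ne_zero (Ioi a)]
  refine (ENNReal.ofReal_pos).mpr ?_ |>.ne'
  rw [setIntegral_pos_iff_support_of_nonneg_ae
    (ae_of_all _ (fun x => (gaussianPDFReal_nonneg 0 1 x)))
    ((integrable_gaussianPDFReal 0 1).integrableOn)]
  have hsupp : Function.support (gaussianPDFReal 0 1) = univ := by
    ext x; simp [Function.mem_support, (gaussianPDFReal_pos 0 1 x one_ne_zero).ne']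
  rw [hsupp, univ_inter, Real.volume_Ioi]
  simp

/-! ### prox facts -/

lemma lasso_measurable_sign : Measurable Real.sign := by
  have h : Real.sign = fun r : ℝ => if r < 0 then (-1:ℝ) else if 0 < r then 1 else 0 :=
    funext fun _ => rfl
  rw [h]
  exact Measurable.ite (measurableSet_lt measurable_id measurable_const) measurable_const
    (Measurable.ite (measurableSet_lt measurable_const measurable_id) measurable_const
      measurable_const)

lemma lasso_measurable_prox (c σ b : ℝ) : Measurable (fun z : ℝ => prox (c + σ*z) b) := by
  have haff : Measurable (fun z : ℝ => c + σ*z) :=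
    measurable_const.add (measurable_const.mul measurable_id)
  exact (lasso_measurable_sign.comp haff).mul
    ((haff.abs.sub measurable_const).max measurable_const)

lemma lasso_measurable_proxD (c σ b : ℝ) : Measurable (fun z : ℝ => proxD (c + σ*z) b) := by
  have haff : Measurable (fun z : ℝ => c + σ*z) :=
    measurable_const.add (measurable_const.mul measurable_id)
  exact Measurable.ite (measurableSet_lt measurable_const haff.abs) measurable_const
    measurable_const

lemma prox_eq_of_lt {x b : ℝ} (hb : 0 ≤ b) (h : b < x) : prox x b = x - b := by
  have hx : 0 < x := hb.trans_lt h
  rw [prox, Real.sign_of_pos hx, abs_of_pos hx, one_mul, max_eq_left (by linarith)]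

lemma proxD_eq_one {x b : ℝ} (h : b < |x|) : proxD x b = 1 := if_pos h

lemma proxD_nonneg (x b : ℝ) : 0 ≤ proxD x b := by
  rw [proxD]; split <;> norm_num

lemma proxD_le_one (x b : ℝ) : proxD x b ≤ 1 := by
  rw [proxD]; split <;> norm_num

lemma lasso_abs_sign_le_one (x : ℝ) : |Real.sign x| ≤ 1 := by
  rcases Real.sign_apply_eq x with h | h | h <;> rw [h] <;> norm_num

lemma abs_prox_le {x b : ℝ} (hb : 0 ≤ b) : |prox x b| ≤ |x| := by
  rw [prox, abs_mul]
  have h2 : |max (|x| - b) 0| ≤ |x| := by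
    rw [abs_of_nonneg (le_max_right _ _)]
    exact max_le (by linarith [abs_nonneg x]) (abs_nonneg x)
  calc |Real.sign x| * |max (|x| - b) 0| ≤ 1 * |x| :=
    mul_le_mul (lasso_abs_sign_le_one x) h2 (abs_nonneg _) zero_le_one
  _ = |x| := one_mul _

lemma prox_sq_le {x b : ℝ} (hb : 0 ≤ b) : (prox x b)^2 ≤ x^2 := by
  have h1 := abs_prox_le (x := x) hb
  calc (prox x b)^2 = |prox x b|^2 := (sq_abs _).symm
  _ ≤ |x|^2 := pow_le_pow_left₀ (abs_nonneg _) h1 2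
  _ = x^2 := sq_abs _

lemma lasso_integrable_prox_sq (c σ b : ℝ) (hb : 0 ≤ b) :
    Integrable (fun z : ℝ => (prox (c + σ*z) b - c)^2) (gaussianReal 0 1) := by
  refine Integrable.mono' ((integrable_const (6*c^2)).add
    ((lasso_gauss_integrable_sq.const_mul (4*σ^2)))) ?_ ?_
  · exact (((lasso_measurable_prox c σ b).sub measurable_const).pow_const 2).aestronglyMeasurable
  · filter_upwards with z
    have h1 : (prox (c + σ*z) b)^2 ≤ (c + σ*z)^2 := prox_sq_le hb
    rw [Real.norm_eq_abs, abs_of_nonneg (sq_nonneg _), Pi.add_apply]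
    nlinarith [sq_nonneg (prox (c + σ*z) b + c), sq_nonneg (c - σ*z)]

lemma lasso_integrable_proxD (c σ b : ℝ) :
    Integrable (fun z : ℝ => proxD (c + σ*z) b) (gaussianReal 0 1) := by
  refine Integrable.mono' (integrable_const (1:ℝ))
    ((lasso_measurable_proxD c σ b).aestronglyMeasurable) ?_
  filter_upwards with z
  rw [Real.norm_eq_abs, abs_of_nonneg (proxD_nonneg _ _)]
  exact proxD_le_one _ _

/-! ### one-step estimates -/

lemma lasso_Estep (c₀ σ b M : ℝ) (hc : 0 < c₀) (hσ : 0 ≤ σ) (hb0 : 0 ≤ b) (hb : b ≤ c₀/4)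
    (hM : 0 ≤ M) (hσM : σ*M ≤ c₀/2) :
    σ^2 * ∫ z in {z : ℝ | |z| ≤ M}, z^2 ∂(gaussianReal 0 1)
      ≤ ∫ z, (prox (c₀ + σ*z) b - c₀)^2 ∂(gaussianReal 0 1) := by
  set γ := gaussianReal 0 1
  set S := {z : ℝ | |z| ≤ M} with hSdef
  have hSm : MeasurableSet S := lasso_ball_meas M
  have key : ∀ z ∈ S, (σ*z - b)^2 = (prox (c₀ + σ*z) b - c₀)^2 := by
    intro z hz
    have hz' : |z| ≤ M := hz
    have h1 : -(σ*M) ≤ σ*z := by nlinarith [neg_abs_le z, abs_nonneg z]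
    have h2 : b < c₀ + σ*z := by nlinarith
    rw [prox_eq_of_lt hb0 h2]
    ring_nf
  have step1 : ∫ z in S, (σ*z - b)^2 ∂γ ≤ ∫ z, (prox (c₀ + σ*z) b - c₀)^2 ∂γ := by
    rw [setIntegral_congr_fun hSm key]
    exact setIntegral_le_integral (lasso_integrable_prox_sq c₀ σ b hb0)
      (ae_of_all _ (fun z => sq_nonneg _))
  refine le_trans ?_ step1
  have hint1 : IntegrableOn (fun z : ℝ => σ^2 * z^2) S γ :=
    (lasso_gauss_integrable_sq.const_mul _).integrableOn
  have hint2 : IntegrableOn (fun z : ℝ => (2*σ*b) * z) S γ :=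
    (lasso_gauss_integrable_id.const_mul _).integrableOn
  have hint12 : IntegrableOn (fun z : ℝ => σ^2 * z^2 - (2*σ*b) * z) S γ := hint1.sub hint2
  have hint3 : IntegrableOn (fun z : ℝ => b^2 * 1) S γ :=
    integrableOn_const (measure_ne_top _ _)
  have e1 : ∫ z in S, (σ*z - b)^2 ∂γ
      = ∫ z in S, (σ^2 * z^2 - (2*σ*b) * z + b^2 * 1) ∂γ :=
    integral_congr_ae (ae_of_all _ (fun z => by ring))
  have e2 : ∫ z in S, (σ^2 * z^2 - (2*σ*b) * z + b^2 * 1) ∂γ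
      = σ^2 * (∫ z in S, z^2 ∂γ) - (2*σ*b) * (∫ z in S, z ∂γ) + b^2 * ∫ z in S, (1:ℝ) ∂γ := by
    rw [integral_add hint12 hint3, integral_sub hint1 hint2, integral_const_mul,
      integral_const_mul, integral_const_mul]
  have e3 : ∫ z in S, (σ*z - b)^2 ∂γ
      = σ^2 * (∫ z in S, z^2 ∂γ) + b^2 * ∫ z in S, (1:ℝ) ∂γ := by
    rw [e1, e2, lasso_setIntegral_id]
    ring
  rw [e3]
  have hpos : 0 ≤ b^2 * ∫ z in S, (1:ℝ) ∂γ :=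
    mul_nonneg (sq_nonneg b) (integral_nonneg (fun z => zero_le_one))
  linarith

lemma lasso_Vstep (c₀ σ b M : ℝ) (hc : 0 < c₀) (hσ : 0 ≤ σ) (hb0 : 0 ≤ b) (hb : b ≤ c₀/4)
    (hM : 0 ≤ M) (hσM : σ*M ≤ c₀/2) :
    ∫ z in {z : ℝ | |z| ≤ M}, (1:ℝ) ∂(gaussianReal 0 1)
      ≤ ∫ z, proxD (c₀ + σ*z) b ∂(gaussianReal 0 1) := by
  set γ := gaussianReal 0 1
  set S := {z : ℝ | |z| ≤ M} with hSdef
  have hSm : MeasurableSet S := lasso_ball_meas M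
  have key : ∀ z ∈ S, (1:ℝ) = proxD (c₀ + σ*z) b := by
    intro z hz
    have hz' : |z| ≤ M := hz
    have h1 : -(σ*M) ≤ σ*z := by nlinarith [neg_abs_le z, abs_nonneg z]
    have h2 : b < c₀ + σ*z := by nlinarith
    rw [proxD_eq_one (lt_of_lt_of_le h2 (le_abs_self _))]
  rw [setIntegral_congr_fun hSm key]
  exact setIntegral_le_integral (lasso_integrable_proxD c₀ σ b)
    (ae_of_all _ (fun z => proxD_nonneg _ _))

lemma lasso_EposStep (c₀ σ b : ℝ) (hc : 0 < c₀) (hσ : 0 < σ) (hb0 : 0 ≤ b) :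
    0 < ∫ z, (prox (c₀ + σ*z) b - c₀)^2 ∂(gaussianReal 0 1) := by
  set γ := gaussianReal 0 1
  set A := Ioi (b/σ + 1) with hA
  have hAm : MeasurableSet A := measurableSet_Ioi
  have key : ∀ z ∈ A, σ^2 ≤ (prox (c₀ + σ*z) b - c₀)^2 := by
    intro z hz
    have hz' : b/σ + 1 < z := hz
    have h1 : b + σ < σ*z := by
      have := (div_lt_iff₀ hσ).mp (show b/σ < z - 1 by linarith)
      nlinarith
    have h2 : b < c₀ + σ*z := by nlinarith
    rw [prox_eq_of_lt hb0 h2]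
    have h3 : σ ≤ c₀ + σ*z - b - c₀ := by linarith
    nlinarith
  calc (0:ℝ) < σ^2 * ∫ z in A, (1:ℝ) ∂γ := mul_pos (pow_pos hσ 2) (lasso_Ioi_pos _)
    _ ≤ ∫ z in A, (prox (c₀ + σ*z) b - c₀)^2 ∂γ := by
        rw [show σ^2 * ∫ z in A, (1:ℝ) ∂γ = ∫ z in A, σ^2 ∂γ by
          rw [setIntegral_const, setIntegral_const]; simp [mul_comm]]
        exact setIntegral_mono_on (integrableOn_const (measure_ne_top _ _))
          ((lasso_integrable_prox_sq c₀ σ b hb0).integrableOn) hAm key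
    _ ≤ ∫ z, (prox (c₀ + σ*z) b - c₀)^2 ∂γ :=
        setIntegral_le_integral (lasso_integrable_prox_sq c₀ σ b hb0)
          (ae_of_all _ (fun z => sq_nonneg _))

lemma lasso_VposStep (σ b : ℝ) (hσ : 0 < σ) (hb0 : 0 ≤ b) :
    0 < ∫ z, proxD (σ*z) b ∂(gaussianReal 0 1) := by
  set γ := gaussianReal 0 1
  set A := Ioi (b/σ + 1) with hA
  have hAm : MeasurableSet A := measurableSet_Ioi
  have key : ∀ z ∈ A, (1:ℝ) = proxD (σ*z) b := by
    intro z hz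
    have hz' : b/σ + 1 < z := hz
    have h1 : b < σ*z := by
      have := (div_lt_iff₀ hσ).mp (show b/σ < z - 1 by linarith)
      nlinarith
    rw [proxD_eq_one (lt_of_lt_of_le h1 (le_abs_self _))]
  have h0 : Integrable (fun z : ℝ => proxD ((0:ℝ) + σ*z) b) γ := lasso_integrable_proxD 0 σ b
  have h0' : Integrable (fun z : ℝ => proxD (σ*z) b) γ := by simpa using h0
  calc (0:ℝ) < ∫ z in A, (1:ℝ) ∂γ := lasso_Ioi_pos _
    _ = ∫ z in A, proxD (σ*z) b ∂γ := setIntegral_congr_fun hAm key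
    _ ≤ ∫ z, proxD (σ*z) b ∂γ :=
        setIntegral_le_integral h0' (ae_of_all _ (fun z => proxD_nonneg _ _))

lemma lasso_sqrt_le_one_add {x : ℝ} (hx : 0 ≤ x) : Real.sqrt x ≤ 1 + x := by
  nlinarith [Real.sq_sqrt hx, Real.sqrt_nonneg x, sq_nonneg (Real.sqrt x - 1)]

/-! ### the trajectory -/

noncomputable def deStep (k n c₀ β a₁ a₂ : ℝ) (p : ℝ × ℝ) : ℝ × ℝ :=
  ((k / n) *
      ∫ z, (prox (c₀ + a₁ * z * Real.sqrt p.1) (β * a₂ * p.2) - c₀) ^ 2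
        ∂(gaussianReal 0 1) +
    (1 - k / n) *
      ∫ z, (prox (a₁ * z * Real.sqrt p.1) (β * a₂ * p.2)) ^ 2
        ∂(gaussianReal 0 1),
   (k / n) *
      ∫ z, β * a₂ * p.2 * proxD (c₀ + a₁ * z * Real.sqrt p.1) (β * a₂ * p.2)
        ∂(gaussianReal 0 1) +
    (1 - k / n) *
      ∫ z, β * a₂ * p.2 * proxD (a₁ * z * Real.sqrt p.1) (β * a₂ * p.2)
        ∂(gaussianReal 0 1))

noncomputable def deTraj (k n c₀ β a₁ a₂ : ℝ) : ℕ → ℝ × ℝ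
  | 0 => (1, 1)
  | (t+1) => deStep k n c₀ β a₁ a₂ (deTraj k n c₀ β a₁ a₂ t)

noncomputable def deE (k n c₀ β a₁ a₂ : ℝ) (t : ℕ) : ℝ := (deTraj k n c₀ β a₁ a₂ t).1

noncomputable def deV (k n c₀ β a₁ a₂ : ℝ) (t : ℕ) : ℝ := (deTraj k n c₀ β a₁ a₂ t).2

lemma deE_zero (k n c₀ β a₁ a₂ : ℝ) : deE k n c₀ β a₁ a₂ 0 = 1 := rfl

lemma deV_zero (k n c₀ β a₁ a₂ : ℝ) : deV k n c₀ β a₁ a₂ 0 = 1 := rfl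

lemma deE_succ (k n c₀ β a₁ a₂ : ℝ) (t : ℕ) : deE k n c₀ β a₁ a₂ (t + 1) =
    (k / n) *
      ∫ z, (prox (c₀ + a₁ * z * Real.sqrt (deE k n c₀ β a₁ a₂ t))
        (β * a₂ * deV k n c₀ β a₁ a₂ t) - c₀) ^ 2 ∂(gaussianReal 0 1) +
    (1 - k / n) *
      ∫ z, (prox (a₁ * z * Real.sqrt (deE k n c₀ β a₁ a₂ t))
        (β * a₂ * deV k n c₀ β a₁ a₂ t)) ^ 2 ∂(gaussianReal 0 1) := rfl

lemma deV_succ (k n c₀ β a₁ a₂ : ℝ) (t : ℕ) : deV k n c₀ β a₁ a₂ (t + 1) =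
    (k / n) *
      ∫ z, β * a₂ * deV k n c₀ β a₁ a₂ t * proxD (c₀ + a₁ * z * Real.sqrt (deE k n c₀ β a₁ a₂ t))
        (β * a₂ * deV k n c₀ β a₁ a₂ t) ∂(gaussianReal 0 1) +
    (1 - k / n) *
      ∫ z, β * a₂ * deV k n c₀ β a₁ a₂ t * proxD (a₁ * z * Real.sqrt (deE k n c₀ β a₁ a₂ t))
        (β * a₂ * deV k n c₀ β a₁ a₂ t) ∂(gaussianReal 0 1) := rfl

end LassoAux

set_option maxHeartbeats 1000000 in
/-- Necessary condition for convergence of the Lasso density evolution with the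
two-point prior `π = (k/n) δ_{c₀} + (1 − k/n) δ_0`: if the recursion converges to
`(0,0)` from all (generic small) positive initial conditions, then `a₁² ≤ n/k` and
`β a₂ ≤ n/k`. -/
theorem lasso_de_necessary_condition
    (k n c₀ β : ℝ) (hk : 0 < k) (hkn : k < n) (hc₀ : 0 < c₀) (hβ : 0 < β)
    (ρ lam : ℕ → ℝ) (hρ : ∀ i, 0 ≤ ρ i) (hlam : ∀ j, 0 ≤ lam j)
    (hρ0 : ρ 0 = 0) (hρ1 : ρ 1 = 0) (hlam0 : lam 0 = 0) (hlam1 : lam 1 = 0)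
    (hρsum : ∑' i, ρ i = 1) (hlamsum : ∑' j, lam j = 1)
    (a₁ a₂ : ℝ)
    (ha₁ : a₁ = ∑' i, ∑' j, ρ i * lam j * Real.sqrt ((i : ℝ) / (j : ℝ)))
    (ha₂ : a₂ = ∑' i, ∑' j, ρ i * lam j * ((i : ℝ) / (j : ℝ)))
    (hconv : ∀ E V : ℕ → ℝ, 0 < E 0 → 0 < V 0 →
      (∀ t, E (t + 1) =
        (k / n) *
          ∫ z, (prox (c₀ + a₁ * z * Real.sqrt (E t)) (β * a₂ * V t) - c₀) ^ 2
            ∂(gaussianReal 0 1) +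
        (1 - k / n) *
          ∫ z, (prox (a₁ * z * Real.sqrt (E t)) (β * a₂ * V t)) ^ 2
            ∂(gaussianReal 0 1)) →
      (∀ t, V (t + 1) =
        (k / n) *
          ∫ z, β * a₂ * V t * proxD (c₀ + a₁ * z * Real.sqrt (E t)) (β * a₂ * V t)
            ∂(gaussianReal 0 1) +
        (1 - k / n) *
          ∫ z, β * a₂ * V t * proxD (a₁ * z * Real.sqrt (E t)) (β * a₂ * V t)
            ∂(gaussianReal 0 1)) →
      Tendsto E atTop (nhds 0) ∧ Tendsto V atTop (nhds 0)) :
    a₁ ^ 2 ≤ n / k ∧ β * a₂ ≤ n / k := by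
  have hn : 0 < n := hk.trans hkn
  have hknp : 0 < k / n := div_pos hk hn
  have h1kn : 0 < 1 - k / n := by
    rw [sub_pos, div_lt_one hn]
    exact hkn
  have ha₁0 : 0 ≤ a₁ := by
    rw [ha₁]
    exact tsum_nonneg fun i => tsum_nonneg fun j =>
      mul_nonneg (mul_nonneg (hρ i) (hlam j)) (Real.sqrt_nonneg _)
  have ha₂0 : 0 ≤ a₂ := by
    rw [ha₂]
    exact tsum_nonneg fun i => tsum_nonneg fun j =>
      mul_nonneg (mul_nonneg (hρ i) (hlam j))
        (div_nonneg (Nat.cast_nonneg i) (Nat.cast_nonneg j))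
  set E : ℕ → ℝ := deE k n c₀ β a₁ a₂ with hEdef
  set V : ℕ → ℝ := deV k n c₀ β a₁ a₂ with hVdef
  have hErec : ∀ t, E (t + 1) =
      (k / n) *
        ∫ z, (prox (c₀ + a₁ * z * Real.sqrt (E t)) (β * a₂ * V t) - c₀) ^ 2
          ∂(gaussianReal 0 1) +
      (1 - k / n) *
        ∫ z, (prox (a₁ * z * Real.sqrt (E t)) (β * a₂ * V t)) ^ 2
          ∂(gaussianReal 0 1) := fun t => deE_succ k n c₀ β a₁ a₂ t
  have hVrec : ∀ t, V (t + 1) =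
      (k / n) *
        ∫ z, β * a₂ * V t * proxD (c₀ + a₁ * z * Real.sqrt (E t)) (β * a₂ * V t)
          ∂(gaussianReal 0 1) +
      (1 - k / n) *
        ∫ z, β * a₂ * V t * proxD (a₁ * z * Real.sqrt (E t)) (β * a₂ * V t)
          ∂(gaussianReal 0 1) := fun t => deV_succ k n c₀ β a₁ a₂ t
  have hE0 : 0 < E 0 := by rw [hEdef, deE_zero]; exact one_pos
  have hV0 : 0 < V 0 := by rw [hVdef, deV_zero]; exact one_pos
  obtain ⟨hElim, hVlim⟩ := hconv E V hE0 hV0 hErec hVrec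
  have hVnonneg : ∀ t, 0 ≤ V t := by
    intro t
    induction t with
    | zero => rw [hVdef, deV_zero]; exact zero_le_one
    | succ t ih =>
      have hb : 0 ≤ β * a₂ * V t := mul_nonneg (mul_nonneg hβ.le ha₂0) ih
      rw [hVrec t]
      have h1 : 0 ≤ ∫ z, β * a₂ * V t *
          proxD (c₀ + a₁ * z * Real.sqrt (E t)) (β * a₂ * V t) ∂(gaussianReal 0 1) :=
        integral_nonneg fun z => mul_nonneg hb (proxD_nonneg _ _)
      have h2 : 0 ≤ ∫ z, β * a₂ * V t *
          proxD (a₁ * z * Real.sqrt (E t)) (β * a₂ * V t) ∂(gaussianReal 0 1) :=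
        integral_nonneg fun z => mul_nonneg hb (proxD_nonneg _ _)
      exact add_nonneg (mul_nonneg hknp.le h1) (mul_nonneg h1kn.le h2)
  have hEpos : 0 < a₁ → ∀ t, 0 < E t := by
    intro ha₁p t
    induction t with
    | zero => rw [hEdef, deE_zero]; exact one_pos
    | succ t ih =>
      rw [hErec t]
      have hb0 : 0 ≤ β * a₂ * V t := mul_nonneg (mul_nonneg hβ.le ha₂0) (hVnonneg t)
      have hσ : 0 < a₁ * Real.sqrt (E t) := mul_pos ha₁p (Real.sqrt_pos.mpr ih)
      have harg : ∀ z : ℝ, a₁ * z * Real.sqrt (E t) = (a₁ * Real.sqrt (E t)) * z :=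
        fun z => by ring
      have hI : 0 < ∫ z, (prox (c₀ + a₁ * z * Real.sqrt (E t)) (β * a₂ * V t) - c₀) ^ 2
          ∂(gaussianReal 0 1) := by
        simp only [harg]
        exact lasso_EposStep c₀ _ _ hc₀ hσ hb0
      have hII : 0 ≤ ∫ z, (prox (a₁ * z * Real.sqrt (E t)) (β * a₂ * V t)) ^ 2
          ∂(gaussianReal 0 1) := integral_nonneg fun z => sq_nonneg _
      exact add_pos_of_pos_of_nonneg (mul_pos hknp hI) (mul_nonneg h1kn.le hII)
  constructor
  · -- Part 1 : a₁ ^ 2 ≤ n / k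
    by_contra hcon
    push_neg at hcon
    have ha₁p : 0 < a₁ := by nlinarith [div_pos hn hk]
    have hqpos : 0 < (k / n) * a₁ ^ 2 := mul_pos hknp (pow_pos ha₁p 2)
    have hq : 1 < (k / n) * a₁ ^ 2 := by
      have h : (k / n) * (n / k) = 1 := by field_simp
      nlinarith [mul_lt_mul_of_pos_left hcon hknp]
    obtain ⟨M, hM⟩ := (lasso_tendsto_sq.eventually
      (eventually_gt_nhds (inv_lt_one_of_one_lt₀ hq))).exists
    set F := ∫ z in {z : ℝ | |z| ≤ (M:ℝ)}, z ^ 2 ∂(gaussianReal 0 1) with hFdef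
    have hqF : 1 ≤ (k / n) * a₁ ^ 2 * F := by
      have h1 := mul_lt_mul_of_pos_left hM hqpos
      rw [mul_inv_cancel₀ hqpos.ne'] at h1
      exact h1.le
    have hε₁ : (0:ℝ) < (c₀ / (2 * a₁ * ((M:ℝ) + 1))) ^ 2 := by positivity
    have hε₂ : (0:ℝ) < c₀ / (4 * (β * a₂ + 1)) := by positivity
    obtain ⟨N, hN⟩ := eventually_atTop.mp
      ((hElim.eventually (eventually_lt_nhds hε₁)).and
        (hVlim.eventually (eventually_lt_nhds hε₂)))
    have hgrow : ∀ t, N ≤ t → E t ≤ E (t + 1) := by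
      intro t ht
      obtain ⟨hEs, hVs⟩ := hN t ht
      have hEt0 : 0 < E t := hEpos ha₁p t
      have hb0 : 0 ≤ β * a₂ * V t := mul_nonneg (mul_nonneg hβ.le ha₂0) (hVnonneg t)
      have hb4 : β * a₂ * V t ≤ c₀ / 4 := by
        have h1 : β * a₂ * V t ≤ β * a₂ * (c₀ / (4 * (β * a₂ + 1))) :=
          mul_le_mul_of_nonneg_left hVs.le (mul_nonneg hβ.le ha₂0)
        have h2 : β * a₂ * (c₀ / (4 * (β * a₂ + 1))) ≤ c₀ / 4 := by
          rw [show β * a₂ * (c₀ / (4 * (β * a₂ + 1)))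
              = (c₀ * (β * a₂)) / (4 * (β * a₂ + 1)) by ring]
          rw [div_le_div_iff₀ (by positivity) (by norm_num)]
          nlinarith [mul_nonneg hβ.le ha₂0, hc₀.le]
        linarith
      have hsq : Real.sqrt (E t) ≤ c₀ / (2 * a₁ * ((M:ℝ) + 1)) := by
        have h := Real.sqrt_le_sqrt hEs.le
        rwa [Real.sqrt_sq (by positivity)] at h
      have hσ0 : 0 ≤ a₁ * Real.sqrt (E t) := mul_nonneg ha₁p.le (Real.sqrt_nonneg _)
      have hσM : (a₁ * Real.sqrt (E t)) * (M:ℝ) ≤ c₀ / 2 := by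
        have h1 : (a₁ * Real.sqrt (E t)) * (M:ℝ)
            ≤ (a₁ * (c₀ / (2 * a₁ * ((M:ℝ) + 1)))) * (M:ℝ) :=
          mul_le_mul_of_nonneg_right (mul_le_mul_of_nonneg_left hsq ha₁p.le)
            (Nat.cast_nonneg M)
        have h2 : (a₁ * (c₀ / (2 * a₁ * ((M:ℝ) + 1)))) * (M:ℝ) ≤ c₀ / 2 := by
          rw [show a₁ * (c₀ / (2 * a₁ * ((M:ℝ) + 1))) * (M:ℝ)
              = (c₀ * (M:ℝ) * a₁) / (2 * a₁ * ((M:ℝ) + 1)) by ring]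
          rw [div_le_div_iff₀ (by positivity) (by norm_num)]
          nlinarith [Nat.cast_nonneg (α := ℝ) M, ha₁p, hc₀.le,
            mul_nonneg hc₀.le (Nat.cast_nonneg (α := ℝ) M)]
        linarith
      rw [hErec t]
      have harg : ∀ z : ℝ, a₁ * z * Real.sqrt (E t) = (a₁ * Real.sqrt (E t)) * z :=
        fun z => by ring
      have hI : (a₁ * Real.sqrt (E t)) ^ 2 * F
          ≤ ∫ z, (prox (c₀ + a₁ * z * Real.sqrt (E t)) (β * a₂ * V t) - c₀) ^ 2
            ∂(gaussianReal 0 1) := by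
        simp only [harg]
        exact lasso_Estep c₀ _ _ (M:ℝ) hc₀ hσ0 hb0 hb4 (Nat.cast_nonneg M) hσM
      have hII : 0 ≤ ∫ z, (prox (a₁ * z * Real.sqrt (E t)) (β * a₂ * V t)) ^ 2
          ∂(gaussianReal 0 1) := integral_nonneg fun z => sq_nonneg _
      have hσsq : (a₁ * Real.sqrt (E t)) ^ 2 = a₁ ^ 2 * E t := by
        rw [mul_pow, Real.sq_sqrt hEt0.le]
      have c1 : E t ≤ (k / n) * ((a₁ * Real.sqrt (E t)) ^ 2 * F) := by
        rw [hσsq]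
        nlinarith [mul_le_mul_of_nonneg_right hqF hEt0.le]
      have c2 : (k / n) * ((a₁ * Real.sqrt (E t)) ^ 2 * F)
          ≤ (k / n) * ∫ z, (prox (c₀ + a₁ * z * Real.sqrt (E t)) (β * a₂ * V t) - c₀) ^ 2
            ∂(gaussianReal 0 1) := mul_le_mul_of_nonneg_left hI hknp.le
      nlinarith [mul_nonneg h1kn.le hII]
    have hge : ∀ t, N ≤ t → E N ≤ E t := by
      intro t ht
      induction t, ht using Nat.le_induction with
      | base => exact le_refl _
      | succ t ht ih => exact ih.trans (hgrow t ht)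
    obtain ⟨T, hT⟩ := ((hElim.eventually (eventually_lt_nhds (hEpos ha₁p N))).and
      (eventually_ge_atTop N)).exists
    exact absurd (hge T hT.2) (not_le.mpr hT.1)
  · -- Part 2 : β * a₂ ≤ n / k
    by_contra hcon
    push_neg at hcon
    have ha₂p : 0 < a₂ := by
      by_contra h
      push_neg at h
      have h2 : β * a₂ ≤ 0 := mul_nonpos_of_nonneg_of_nonpos hβ.le h
      linarith [div_pos hn hk]
    -- summability bookkeeping to get 0 < a₁
    have hρs : Summable ρ := by
      by_contra h
      rw [tsum_eq_zero_of_not_summable h] at hρsum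
      norm_num at hρsum
    have hlams : Summable lam := by
      by_contra h
      rw [tsum_eq_zero_of_not_summable h] at hlamsum
      norm_num at hlamsum
    have hterm2_nn : ∀ i j, 0 ≤ ρ i * lam j * ((i:ℝ) / (j:ℝ)) := fun i j =>
      mul_nonneg (mul_nonneg (hρ i) (hlam j))
        (div_nonneg (Nat.cast_nonneg i) (Nat.cast_nonneg j))
    have hterm1_nn : ∀ i j, 0 ≤ ρ i * lam j * Real.sqrt ((i:ℝ) / (j:ℝ)) := fun i j =>
      mul_nonneg (mul_nonneg (hρ i) (hlam j)) (Real.sqrt_nonneg _)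
    have hdivle : ∀ i j : ℕ, ((i:ℝ) / (j:ℝ)) ≤ (i:ℝ) := by
      intro i j
      rcases Nat.eq_zero_or_pos j with hj | hj
      · subst hj
        simp
      · exact div_le_self (Nat.cast_nonneg i) (by exact_mod_cast hj)
    have hinner2 : ∀ i, Summable (fun j => ρ i * lam j * ((i:ℝ) / (j:ℝ))) := by
      intro i
      refine Summable.of_nonneg_of_le (hterm2_nn i) (fun j => ?_) (hlams.mul_left (ρ i * i))
      calc ρ i * lam j * ((i:ℝ) / (j:ℝ)) ≤ ρ i * lam j * (i:ℝ) :=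
            mul_le_mul_of_nonneg_left (hdivle i j) (mul_nonneg (hρ i) (hlam j))
        _ = (ρ i * (i:ℝ)) * lam j := by ring
    have hinner1 : ∀ i, Summable (fun j => ρ i * lam j * Real.sqrt ((i:ℝ) / (j:ℝ))) := by
      intro i
      refine Summable.of_nonneg_of_le (hterm1_nn i) (fun j => ?_)
        (((hlams.mul_left (ρ i)).add (hinner2 i)))
      have hsle : Real.sqrt ((i:ℝ) / (j:ℝ)) ≤ 1 + (i:ℝ) / (j:ℝ) :=
        lasso_sqrt_le_one_add (div_nonneg (Nat.cast_nonneg i) (Nat.cast_nonneg j))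
      calc ρ i * lam j * Real.sqrt ((i:ℝ) / (j:ℝ))
            ≤ ρ i * lam j * (1 + (i:ℝ) / (j:ℝ)) :=
            mul_le_mul_of_nonneg_left hsle (mul_nonneg (hρ i) (hlam j))
        _ = ρ i * lam j + ρ i * lam j * ((i:ℝ) / (j:ℝ)) := by ring
    have hfs : Summable (fun i => ∑' j, ρ i * lam j * ((i:ℝ) / (j:ℝ))) := by
      by_contra h
      rw [ha₂, tsum_eq_zero_of_not_summable h] at ha₂p
      exact lt_irrefl _ ha₂p
    have hgs : Summable (fun i => ∑' j, ρ i * lam j * Real.sqrt ((i:ℝ) / (j:ℝ))) := by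
      refine Summable.of_nonneg_of_le (fun i => tsum_nonneg (hterm1_nn i))
        (fun i => ?_) (hρs.add hfs)
      calc (∑' j, ρ i * lam j * Real.sqrt ((i:ℝ) / (j:ℝ)))
          ≤ ∑' j, (ρ i * lam j + ρ i * lam j * ((i:ℝ) / (j:ℝ))) := by
            refine Summable.tsum_le_tsum (fun j => ?_) (hinner1 i)
              ((hlams.mul_left (ρ i)).add (hinner2 i))
            have hsle : Real.sqrt ((i:ℝ) / (j:ℝ)) ≤ 1 + (i:ℝ) / (j:ℝ) :=
              lasso_sqrt_le_one_add (div_nonneg (Nat.cast_nonneg i) (Nat.cast_nonneg j))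
            calc ρ i * lam j * Real.sqrt ((i:ℝ) / (j:ℝ))
                ≤ ρ i * lam j * (1 + (i:ℝ) / (j:ℝ)) :=
                mul_le_mul_of_nonneg_left hsle (mul_nonneg (hρ i) (hlam j))
              _ = ρ i * lam j + ρ i * lam j * ((i:ℝ) / (j:ℝ)) := by ring
        _ = (∑' j, ρ i * lam j) + ∑' j, ρ i * lam j * ((i:ℝ) / (j:ℝ)) :=
            Summable.tsum_add (hlams.mul_left (ρ i)) (hinner2 i)
        _ = ρ i + ∑' j, ρ i * lam j * ((i:ℝ) / (j:ℝ)) := by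
            rw [tsum_mul_left, hlamsum, mul_one]
    obtain ⟨i₀, hi₀⟩ : ∃ i, 0 < ∑' j, ρ i * lam j * ((i:ℝ) / (j:ℝ)) := by
      by_contra h
      push_neg at h
      have hz : ∀ i, (∑' j, ρ i * lam j * ((i:ℝ) / (j:ℝ))) = 0 :=
        fun i => le_antisymm (h i) (tsum_nonneg (hterm2_nn i))
      rw [ha₂, tsum_congr hz, tsum_zero] at ha₂p
      exact lt_irrefl _ ha₂p
    obtain ⟨j₀, hj₀⟩ : ∃ j, 0 < ρ i₀ * lam j * ((i₀:ℝ) / (j:ℝ)) := by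
      by_contra h
      push_neg at h
      have hz : ∀ j, ρ i₀ * lam j * ((i₀:ℝ) / (j:ℝ)) = 0 :=
        fun j => le_antisymm (h j) (hterm2_nn i₀ j)
      rw [tsum_congr hz, tsum_zero] at hi₀
      exact lt_irrefl _ hi₀
    have hd : 0 < (i₀:ℝ) / (j₀:ℝ) := by
      by_contra h
      push_neg at h
      nlinarith [mul_nonneg (hρ i₀) (hlam j₀)]
    have hrl : 0 < ρ i₀ * lam j₀ := by
      by_contra h
      push_neg at h
      nlinarith
    have ha₁p : 0 < a₁ := by
      rw [ha₁]
      calc (0:ℝ) < ρ i₀ * lam j₀ * Real.sqrt ((i₀:ℝ) / (j₀:ℝ)) :=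
            mul_pos hrl (Real.sqrt_pos.mpr hd)
        _ ≤ ∑' j, ρ i₀ * lam j * Real.sqrt ((i₀:ℝ) / (j:ℝ)) :=
            Summable.le_tsum (hinner1 i₀) j₀ (fun j _ => hterm1_nn i₀ j)
        _ ≤ ∑' i, ∑' j, ρ i * lam j * Real.sqrt ((i:ℝ) / (j:ℝ)) :=
            Summable.le_tsum hgs i₀ (fun i _ => tsum_nonneg (hterm1_nn i))
    -- positivity of V along the trajectory
    have hVpos : ∀ t, 0 < V t := by
      intro t
      induction t with
      | zero => rw [hVdef, deV_zero]; exact one_pos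
      | succ t ih =>
        rw [hVrec t]
        have hb0 : 0 ≤ β * a₂ * V t := mul_nonneg (mul_nonneg hβ.le ha₂0) ih.le
        have hbp : 0 < β * a₂ * V t := mul_pos (mul_pos hβ ha₂p) ih
        have hσ : 0 < a₁ * Real.sqrt (E t) := mul_pos ha₁p (Real.sqrt_pos.mpr (hEpos ha₁p t))
        have harg : ∀ z : ℝ, a₁ * z * Real.sqrt (E t) = (a₁ * Real.sqrt (E t)) * z :=
          fun z => by ring
        have hJ1 : 0 ≤ ∫ z, β * a₂ * V t *
            proxD (c₀ + a₁ * z * Real.sqrt (E t)) (β * a₂ * V t) ∂(gaussianReal 0 1) :=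
          integral_nonneg fun z => mul_nonneg hb0 (proxD_nonneg _ _)
        have hJ2 : 0 < ∫ z, β * a₂ * V t *
            proxD (a₁ * z * Real.sqrt (E t)) (β * a₂ * V t) ∂(gaussianReal 0 1) := by
          simp only [harg]
          rw [integral_const_mul]
          exact mul_pos hbp (lasso_VposStep _ _ hσ hb0)
        exact add_pos_of_nonneg_of_pos (mul_nonneg hknp.le hJ1) (mul_pos h1kn hJ2)
    have hqpos : 0 < (k / n) * (β * a₂) := mul_pos hknp (mul_pos hβ ha₂p)
    have hq : 1 < (k / n) * (β * a₂) := by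
      have h : (k / n) * (n / k) = 1 := by field_simp
      nlinarith [mul_lt_mul_of_pos_left hcon hknp]
    obtain ⟨M, hM⟩ := (lasso_tendsto_one.eventually
      (eventually_gt_nhds (inv_lt_one_of_one_lt₀ hq))).exists
    set G := ∫ z in {z : ℝ | |z| ≤ (M:ℝ)}, (1:ℝ) ∂(gaussianReal 0 1) with hGdef
    have hqG : 1 ≤ (k / n) * (β * a₂) * G := by
      have h1 := mul_lt_mul_of_pos_left hM hqpos
      rw [mul_inv_cancel₀ hqpos.ne'] at h1
      exact h1.le
    have hε₁ : (0:ℝ) < (c₀ / (2 * a₁ * ((M:ℝ) + 1))) ^ 2 := by positivity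
    have hε₂ : (0:ℝ) < c₀ / (4 * (β * a₂ + 1)) := by positivity
    obtain ⟨N, hN⟩ := eventually_atTop.mp
      ((hElim.eventually (eventually_lt_nhds hε₁)).and
        (hVlim.eventually (eventually_lt_nhds hε₂)))
    have hgrow : ∀ t, N ≤ t → V t ≤ V (t + 1) := by
      intro t ht
      obtain ⟨hEs, hVs⟩ := hN t ht
      have hEt0 : 0 < E t := hEpos ha₁p t
      have hb0 : 0 ≤ β * a₂ * V t := mul_nonneg (mul_nonneg hβ.le ha₂0) (hVnonneg t)
      have hb4 : β * a₂ * V t ≤ c₀ / 4 := by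
        have h1 : β * a₂ * V t ≤ β * a₂ * (c₀ / (4 * (β * a₂ + 1))) :=
          mul_le_mul_of_nonneg_left hVs.le (mul_nonneg hβ.le ha₂0)
        have h2 : β * a₂ * (c₀ / (4 * (β * a₂ + 1))) ≤ c₀ / 4 := by
          rw [show β * a₂ * (c₀ / (4 * (β * a₂ + 1)))
              = (c₀ * (β * a₂)) / (4 * (β * a₂ + 1)) by ring]
          rw [div_le_div_iff₀ (by positivity) (by norm_num)]
          nlinarith [mul_nonneg hβ.le ha₂0, hc₀.le]
        linarith
      have hsq : Real.sqrt (E t) ≤ c₀ / (2 * a₁ * ((M:ℝ) + 1)) := by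
        have h := Real.sqrt_le_sqrt hEs.le
        rwa [Real.sqrt_sq (by positivity)] at h
      have hσ0 : 0 ≤ a₁ * Real.sqrt (E t) := mul_nonneg ha₁p.le (Real.sqrt_nonneg _)
      have hσM : (a₁ * Real.sqrt (E t)) * (M:ℝ) ≤ c₀ / 2 := by
        have h1 : (a₁ * Real.sqrt (E t)) * (M:ℝ)
            ≤ (a₁ * (c₀ / (2 * a₁ * ((M:ℝ) + 1)))) * (M:ℝ) :=
          mul_le_mul_of_nonneg_right (mul_le_mul_of_nonneg_left hsq ha₁p.le)
            (Nat.cast_nonneg M)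
        have h2 : (a₁ * (c₀ / (2 * a₁ * ((M:ℝ) + 1)))) * (M:ℝ) ≤ c₀ / 2 := by
          rw [show a₁ * (c₀ / (2 * a₁ * ((M:ℝ) + 1))) * (M:ℝ)
              = (c₀ * (M:ℝ) * a₁) / (2 * a₁ * ((M:ℝ) + 1)) by ring]
          rw [div_le_div_iff₀ (by positivity) (by norm_num)]
          nlinarith [Nat.cast_nonneg (α := ℝ) M, ha₁p, hc₀.le,
            mul_nonneg hc₀.le (Nat.cast_nonneg (α := ℝ) M)]
        linarith
      rw [hVrec t]
      have harg : ∀ z : ℝ, a₁ * z * Real.sqrt (E t) = (a₁ * Real.sqrt (E t)) * z :=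
        fun z => by ring
      have hJ1 : G ≤ ∫ z, proxD (c₀ + a₁ * z * Real.sqrt (E t)) (β * a₂ * V t)
          ∂(gaussianReal 0 1) := by
        simp only [harg]
        exact lasso_Vstep c₀ _ _ (M:ℝ) hc₀ hσ0 hb0 hb4 (Nat.cast_nonneg M) hσM
      have hmul1 : ∫ z, β * a₂ * V t *
          proxD (c₀ + a₁ * z * Real.sqrt (E t)) (β * a₂ * V t) ∂(gaussianReal 0 1)
          = (β * a₂ * V t) * ∫ z, proxD (c₀ + a₁ * z * Real.sqrt (E t)) (β * a₂ * V t)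
            ∂(gaussianReal 0 1) := integral_const_mul _ _
      have hJ2 : 0 ≤ ∫ z, β * a₂ * V t *
          proxD (a₁ * z * Real.sqrt (E t)) (β * a₂ * V t) ∂(gaussianReal 0 1) :=
        integral_nonneg fun z => mul_nonneg hb0 (proxD_nonneg _ _)
      have c1 : V t ≤ (k / n) * ((β * a₂ * V t) * G) := by
        nlinarith [mul_le_mul_of_nonneg_right hqG (hVpos t).le]
      have c2 : (k / n) * ((β * a₂ * V t) * G)
          ≤ (k / n) * ((β * a₂ * V t) * ∫ z, proxD (c₀ + a₁ * z * Real.sqrt (E t))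
            (β * a₂ * V t) ∂(gaussianReal 0 1)) :=
        mul_le_mul_of_nonneg_left (mul_le_mul_of_nonneg_left hJ1 hb0) hknp.le
      rw [hmul1]
      exact c1.trans (c2.trans (le_add_of_nonneg_right (mul_nonneg h1kn.le hJ2)))
    have hge : ∀ t, N ≤ t → V N ≤ V t := by
      intro t ht
      induction t, ht using Nat.le_induction with
      | base => exact le_refl _
      | succ t ht ih => exact ih.trans (hgrow t ht)
    obtain ⟨T, hT⟩ := ((hVlim.eventually (eventually_lt_nhds (hVpos N))).and
      (eventually_ge_atTop N)).exists
    exact absurd (hge T hT.2) (not_le.mpr hT.1)
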